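/- arXiv:1303.2423 — 4 statements merged into one kernel-verified Lean document; each statement's English description precedes it below -/
import Mathlib

section
/- Let φ be an update function for a transition kernel K on G with stationary distribution π, x ∈ G a starting point, u_1,...,u_n ∈ [0,1]^s a driver sequence generating x_i = φ_i(x; u_1,...,u_i), and 𝒜 ⊆ B(G) a family of test sets. Define D*_{𝒜,π}(P_n) = sup_{A∈𝒜} |n^{-1}Σ_{i=1}^n 1_{x_i∈A} − π(A)| and the push-back discrepancy D*_{𝒜,φ}(U_n) = sup_{A∈𝒜} |n^{-1}Σ_{i=1}^n [1_{(u_1,...,u_i)∈B_i(x,A)} − λ_{is}(B_i(x,A))]|. Then |D*_{𝒜,π}(P_n) − D*_{𝒜,φ}(U_n)| ≤ sup_{A∈𝒜} |n^{-1} Σ_{i=1}^n K^i(x,A) − π(A)|. -/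
open MeasureTheory Classical

/-- The unit cube `[0,1]^s`. -/
abbrev Cube (s : ℕ) := Fin s → unitInterval

/-- Iterates of an update function on finite driver tuples:
`iterFin φ i x u = φ_i(x; u_1, …, u_i)`. -/
def iterFin {G : Type*} {s : ℕ} (φ : G → Cube s → G) :
    (i : ℕ) → G → (Fin i → Cube s) → G
  | 0, x, _ => x
  | n + 1, x, u => φ (iterFin φ n x (fun k => u k.castSucc)) (u (Fin.last n))

/-- The iterated transition kernel: `Kiter K 0 x = δ_x` and
`K^{i+1}(x,A) = ∫_G K(y,A) K^i(x,dy)`. -/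
noncomputable def Kiter {G : Type*} [MeasurableSpace G] (K : G → Measure G) :
    ℕ → G → Measure G
  | 0, x => Measure.dirac x
  | n + 1, x => (Kiter K n x).bind K

section aux
variable {G : Type*} [MeasurableSpace G] {s : ℕ}
  (K : G → Measure G) (φ : G → Cube s → G)

lemma iterFin_meas (hφ : Measurable fun p : G × Cube s => φ p.1 p.2) (x : G) :
    ∀ i, Measurable (iterFin φ i x) := by
  intro i
  induction i with
  | zero => exact measurable_const
  | succ n ih =>
    have h1 : Measurable fun v : Fin (n+1) → Cube s => (fun k => v k.castSucc : Fin n → Cube s) :=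
      measurable_pi_lambda _ fun k => measurable_pi_apply _
    exact hφ.comp ((ih.comp h1).prodMk (measurable_pi_apply (Fin.last n)))

lemma Kiter_eq_map (hφ : Measurable fun p : G × Cube s => φ p.1 p.2)
    (hKmeas : ∀ A : Set G, MeasurableSet A → Measurable fun x => K x A)
    (hupdate : ∀ (x : G) (A : Set G), MeasurableSet A →
      K x A = volume {u : Cube s | φ x u ∈ A})
    (x : G) : ∀ i, Kiter K i x = (volume : Measure (Fin i → Cube s)).map (iterFin φ i x) := by
  have hK : Measurable K := Measure.measurable_of_measurable_coe _ hKmeas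
  intro i
  induction i with
  | zero =>
    show Measure.dirac x = Measure.map (fun _ => x) volume
    rw [Measure.map_const]
    simp
  | succ n ih =>
    have hFn := iterFin_meas φ hφ x n
    have hFsucc := iterFin_meas φ hφ x (n+1)
    ext A hA
    rw [show Kiter K (n+1) x = (Kiter K n x).bind K from rfl,
      Measure.bind_apply hA hK.aemeasurable, ih,
      lintegral_map (hKmeas A hA) hFn,
      Measure.map_apply hFsucc hA]
    have hMP : MeasurePreserving
        (MeasurableEquiv.piFinSuccAbove (fun _ : Fin (n+1) => Cube s) (Fin.last n)).symm
        ((volume : Measure (Cube s)).prod (volume : Measure (Fin n → Cube s)))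
        (volume : Measure (Fin (n+1) → Cube s)) := by
      have := (measurePreserving_piFinSuccAbove
        (fun _ : Fin (n+1) => (volume : Measure (Cube s))) (Fin.last n)).symm
      simpa [volume_pi] using this
    rw [← hMP.measure_preimage (hFsucc hA).nullMeasurableSet]
    have hset : (MeasurableEquiv.piFinSuccAbove (fun _ : Fin (n+1) => Cube s) (Fin.last n)).symm ⁻¹'
        (iterFin φ (n+1) x ⁻¹' A)
        = {p : Cube s × (Fin n → Cube s) | φ (iterFin φ n x p.2) p.1 ∈ A} := by
      ext ⟨c, w⟩
      simp only [Set.mem_preimage, MeasurableEquiv.piFinSuccAbove_symm_apply, Set.mem_setOf_eq]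
      show iterFin φ (n+1) x (Fin.insertNth (Fin.last n) c w) ∈ A ↔ _
      rw [show (Fin.insertNth (α := fun _ : Fin (n+1) => Cube s) (Fin.last n) c w) = Fin.snoc w c
        from Fin.insertNth_last' c w]
      simp [iterFin]
    rw [hset, Measure.prod_apply_symm]
    · congr 1
      funext w
      rw [hupdate (iterFin φ n x w) A hA]
      rfl
    · exact (hφ.comp ((hFn.comp measurable_snd).prodMk measurable_fst)) hA

end aux

open scoped ENNReal

lemma abs_ciSup_sub_ciSup_le {ι : Type*} [Nonempty ι] (f g h : ι → ℝ)
    (hbf : ∀ i, f i ≤ 2) (hbg : ∀ i, g i ≤ 2) (hbh : ∀ i, h i ≤ 2)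
    (hfg : ∀ i, |f i - g i| ≤ h i) :
    |(⨆ i, f i) - ⨆ i, g i| ≤ ⨆ i, h i := by
  have bddf : BddAbove (Set.range f) := ⟨2, by rintro _ ⟨i, rfl⟩; exact hbf i⟩
  have bddg : BddAbove (Set.range g) := ⟨2, by rintro _ ⟨i, rfl⟩; exact hbg i⟩
  have bddh : BddAbove (Set.range h) := ⟨2, by rintro _ ⟨i, rfl⟩; exact hbh i⟩
  rw [abs_sub_le_iff]
  constructor
  · rw [sub_le_iff_le_add]
    refine ciSup_le fun i => ?_
    have h1 : f i ≤ h i + g i := by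
      have := abs_le.mp (hfg i)
      linarith [this.2]
    exact h1.trans (add_le_add (le_ciSup bddh i) (le_ciSup bddg i))
  · rw [sub_le_iff_le_add]
    refine ciSup_le fun i => ?_
    have h1 : g i ≤ h i + f i := by
      have := abs_le.mp (hfg i)
      linarith [this.1]
    exact h1.trans (add_le_add (le_ciSup bddh i) (le_ciSup bddf i))

/-- Theorem (comparison of the discrepancy of the Markov chain points with the
push-back discrepancy of the driver sequence):
`|D*_{𝒜,π}(P_n) − D*_{𝒜,φ}(U_n)| ≤ sup_{A∈𝒜} |n⁻¹ Σ_{i=1}^n K^i(x,A) − π(A)|`. -/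
theorem discrepancy_sub_pushback_le {G : Type*} [MeasurableSpace G] {s : ℕ}
    (K : G → Measure G) (φ : G → Cube s → G) (π : Measure G) [IsProbabilityMeasure π]
    (hprob : ∀ x, IsProbabilityMeasure (K x))
    (hKmeas : ∀ A : Set G, MeasurableSet A → Measurable fun x => K x A)
    (hφ : Measurable fun p : G × Cube s => φ p.1 p.2)
    (hstat : ∀ A : Set G, MeasurableSet A → ∫⁻ x, K x A ∂π = π A)
    (hupdate : ∀ (x : G) (A : Set G), MeasurableSet A →
      K x A = volume {u : Cube s | φ x u ∈ A})
    (𝒜 : Set (Set G)) (h𝒜 : ∀ A ∈ 𝒜, MeasurableSet A)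
    (n : ℕ) (hn : 1 ≤ n) (x : G) (u : Fin n → Cube s) :
    |(⨆ A : 𝒜, |(n : ℝ)⁻¹ * ∑ i : Fin n,
          (if iterFin φ (i.1 + 1) x (fun k => u (Fin.castLE i.isLt k)) ∈ (A : Set G)
            then (1 : ℝ) else 0) - (π A).toReal|)
      - (⨆ A : 𝒜, |(n : ℝ)⁻¹ * ∑ i : Fin n,
          ((if iterFin φ (i.1 + 1) x (fun k => u (Fin.castLE i.isLt k)) ∈ (A : Set G)
              then (1 : ℝ) else 0)
            - (volume {v : Fin (i.1 + 1) → Cube s | iterFin φ (i.1 + 1) x v ∈ (A : Set G)}).toReal)|)|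
    ≤ ⨆ A : 𝒜, |(n : ℝ)⁻¹ * ∑ i : Fin n, (Kiter K (i.1 + 1) x (A : Set G)).toReal
        - (π A).toReal| := by
  classical
  by_cases hne : Nonempty ↥𝒜
  swap
  · rw [not_nonempty_iff] at hne
    simp [Real.iSup_of_isEmpty]
  have hKmap := Kiter_eq_map K φ hφ hKmeas hupdate x
  have hvol : ∀ (A : Set G), MeasurableSet A → ∀ m : ℕ,
      (volume {v : Fin (m + 1) → Cube s | iterFin φ (m + 1) x v ∈ A})
        = Kiter K (m + 1) x A := by
    intro A hA m
    rw [hKmap (m + 1), Measure.map_apply (iterFin_meas φ hφ x (m + 1)) hA]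
    rfl
  have hKprob : ∀ m : ℕ, IsProbabilityMeasure (Kiter K m x) := by
    intro m
    rw [hKmap m]
    exact Measure.isProbabilityMeasure_map (iterFin_meas φ hφ x m).aemeasurable
  have hn0 : (0 : ℝ) < (n : ℝ) := by exact_mod_cast hn
  -- rewrite the second supremum using the kernel identity
  have hg : ∀ A : 𝒜, |(n : ℝ)⁻¹ * ∑ i : Fin n,
          ((if iterFin φ (i.1 + 1) x (fun k => u (Fin.castLE i.isLt k)) ∈ (A : Set G)
              then (1 : ℝ) else 0)
            - (volume {v : Fin (i.1 + 1) → Cube s | iterFin φ (i.1 + 1) x v ∈ (A : Set G)}).toReal)|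
        = |((n : ℝ)⁻¹ * ∑ i : Fin n,
            (if iterFin φ (i.1 + 1) x (fun k => u (Fin.castLE i.isLt k)) ∈ (A : Set G)
              then (1 : ℝ) else 0))
          - ((n : ℝ)⁻¹ * ∑ i : Fin n, (Kiter K (i.1 + 1) x (A : Set G)).toReal)| := by
    intro A
    rw [Finset.sum_sub_distrib, mul_sub]
    congr 3
    refine Finset.sum_congr rfl fun i _ => ?_
    rw [hvol (A : Set G) (h𝒜 A A.2) i.1]
  rw [iSup_congr hg]
  -- bounds
  have hSb : ∀ A : Set G, 0 ≤ ((n : ℝ)⁻¹ * ∑ i : Fin n,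
      (if iterFin φ (i.1 + 1) x (fun k => u (Fin.castLE i.isLt k)) ∈ A
        then (1 : ℝ) else 0)) ∧ ((n : ℝ)⁻¹ * ∑ i : Fin n,
      (if iterFin φ (i.1 + 1) x (fun k => u (Fin.castLE i.isLt k)) ∈ A
        then (1 : ℝ) else 0)) ≤ 1 := by
    intro A
    constructor
    · exact mul_nonneg (by positivity) (Finset.sum_nonneg fun i _ => by positivity)
    · have h1 : (∑ i : Fin n, (if iterFin φ (i.1 + 1) x
          (fun k => u (Fin.castLE i.isLt k)) ∈ A then (1 : ℝ) else 0)) ≤ (n : ℝ) := by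
        calc _ ≤ ∑ _i : Fin n, (1 : ℝ) :=
              Finset.sum_le_sum fun i _ => by split <;> norm_num
          _ = (n : ℝ) := by simp
      calc (n : ℝ)⁻¹ * _ ≤ (n : ℝ)⁻¹ * (n : ℝ) :=
            mul_le_mul_of_nonneg_left h1 (by positivity)
        _ = 1 := inv_mul_cancel₀ hn0.ne'
  have hWb : ∀ A : Set G, 0 ≤ ((n : ℝ)⁻¹ * ∑ i : Fin n, (Kiter K (i.1 + 1) x A).toReal)
      ∧ ((n : ℝ)⁻¹ * ∑ i : Fin n, (Kiter K (i.1 + 1) x A).toReal) ≤ 1 := by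
    intro A
    constructor
    · exact mul_nonneg (by positivity) (Finset.sum_nonneg fun i _ => ENNReal.toReal_nonneg)
    · have h1 : (∑ i : Fin n, (Kiter K (i.1 + 1) x A).toReal) ≤ (n : ℝ) := by
        calc _ ≤ ∑ _i : Fin n, (1 : ℝ) := by
              refine Finset.sum_le_sum fun i _ => ?_
              have := hKprob (i.1 + 1)
              have h2 : Kiter K (i.1 + 1) x A ≤ 1 := prob_le_one
              calc (Kiter K (i.1 + 1) x A).toReal
                  ≤ (1 : ℝ≥0∞).toReal := ENNReal.toReal_mono (by norm_num) h2
                _ = 1 := by norm_num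
          _ = (n : ℝ) := by simp
      calc (n : ℝ)⁻¹ * _ ≤ (n : ℝ)⁻¹ * (n : ℝ) :=
            mul_le_mul_of_nonneg_left h1 (by positivity)
        _ = 1 := inv_mul_cancel₀ hn0.ne'
  have hπb : ∀ A : Set G, 0 ≤ (π A).toReal ∧ (π A).toReal ≤ 1 := by
    intro A
    refine ⟨ENNReal.toReal_nonneg, ?_⟩
    calc (π A).toReal ≤ (1 : ℝ≥0∞).toReal := ENNReal.toReal_mono (by norm_num) prob_le_one
      _ = 1 := by norm_num
  have habs : ∀ a b : ℝ, 0 ≤ a → a ≤ 1 → 0 ≤ b → b ≤ 1 → |a - b| ≤ 2 := by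
    intro a b ha ha1 hb hb1
    rw [abs_sub_le_iff]
    constructor <;> linarith
  refine abs_ciSup_sub_ciSup_le _ _ _ ?_ ?_ ?_ ?_
  · intro A
    exact habs _ _ (hSb _).1 (hSb _).2 (hπb _).1 (hπb _).2
  · intro A
    exact habs _ _ (hSb _).1 (hSb _).2 (hWb _).1 (hWb _).2
  · intro A
    exact habs _ _ (hWb _).1 (hWb _).2 (hπb _).1 (hπb _).2
  · intro A
    have h1 := abs_sub_abs_le_abs_sub
      (((n : ℝ)⁻¹ * ∑ i : Fin n,
          (if iterFin φ (i.1 + 1) x (fun k => u (Fin.castLE i.isLt k)) ∈ (A : Set G)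
            then (1 : ℝ) else 0)) - (π (A : Set G)).toReal)
      (((n : ℝ)⁻¹ * ∑ i : Fin n,
          (if iterFin φ (i.1 + 1) x (fun k => u (Fin.castLE i.isLt k)) ∈ (A : Set G)
            then (1 : ℝ) else 0))
        - ((n : ℝ)⁻¹ * ∑ i : Fin n, (Kiter K (i.1 + 1) x (A : Set G)).toReal))
    calc _ ≤ _ := abs_abs_sub_abs_le_abs_sub _ _
      _ = _ := by
        rw [show ((((n : ℝ)⁻¹ * ∑ i : Fin n,
            (if iterFin φ (i.1 + 1) x (fun k => u (Fin.castLE i.isLt k)) ∈ (A : Set G)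
              then (1 : ℝ) else 0)) - (π (A : Set G)).toReal)
          - ((((n : ℝ)⁻¹ * ∑ i : Fin n,
            (if iterFin φ (i.1 + 1) x (fun k => u (Fin.castLE i.isLt k)) ∈ (A : Set G)
              then (1 : ℝ) else 0))
            - ((n : ℝ)⁻¹ * ∑ i : Fin n, (Kiter K (i.1 + 1) x (A : Set G)).toReal))))
          = (((n : ℝ)⁻¹ * ∑ i : Fin n, (Kiter K (i.1 + 1) x (A : Set G)).toReal)
            - (π (A : Set G)).toReal) by ring]
end

section
/- Let G ⊆ ℝ^d and (G, B(G), π) a probability space, and 𝒜 = {(−∞, x) ∩ G : x ∈ (ℝ ∪ {±∞})^d} the family of anchored lower-left boxes intersected with G. Then for every δ > 0 there exists a δ-cover Γ_δ of 𝒜 with respect to π of cardinality |Γ_δ| ≤ (3 + 4c²dδ^{-2})^d, where c > 0 is an absolute constant. -/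
open MeasureTheory
open scoped ENNReal

open Set in
open scoped ENNReal in
lemma lemmaA {Ω : Type*} [MeasurableSpace Ω] (μ : Measure Ω) [IsProbabilityMeasure μ]
    (g : Ω → ℝ) (hg : Measurable g) (ε : ℝ) (hε : 0 < ε) (N : ℕ) (hN2 : 2 ≤ N)
    (hNε : 1 ≤ (N : ℝ) * ε) (hN1 : ((N : ℝ) - 1) * ε < 1) :
    ∃ s : Finset (Set Ω × Set Ω), s.card ≤ N ∧
      (∀ p ∈ s, MeasurableSet p.1 ∧ MeasurableSet p.2) ∧
      ∀ x : EReal, ∃ p ∈ s, p.1 ⊆ {ω | (g ω : EReal) < x} ∧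
        {ω | (g ω : EReal) < x} ⊆ p.2 ∧ μ (p.2 \ p.1) ≤ ENNReal.ofReal ε := by
  classical
  set S : ℕ → Set ℝ := fun k => {t | ENNReal.ofReal (k * ε) ≤ μ {ω | g ω ≤ t}} with hS
  set t : ℕ → ℝ := fun k => sInf (S k) with ht
  have hmeasle : ∀ c : ℝ, MeasurableSet {ω | g ω ≤ c} := fun c => hg measurableSet_Iic
  have hmeaslt : ∀ c : ℝ, MeasurableSet {ω | g ω < c} := fun c => hg measurableSet_Iio
  -- range of relevant indices
  have hklt1 : ∀ k : ℕ, k ≤ N - 1 → (k : ℝ) * ε < 1 := by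
    intro k hk
    have : (k : ℝ) ≤ (N : ℝ) - 1 := by
      have h2 : (k : ℕ) + 1 ≤ N := by omega
      have h3 : ((k : ℕ) : ℝ) + 1 ≤ (N : ℝ) := by exact_mod_cast h2
      linarith
    calc (k : ℝ) * ε ≤ ((N : ℝ) - 1) * ε := by nlinarith
    _ < 1 := hN1
  have hSne : ∀ k : ℕ, k ≤ N - 1 → (S k).Nonempty := by
    intro k hk
    have hu : (⋃ n : ℕ, {ω | g ω ≤ (n : ℝ)}) = univ := by
      ext ω; simp only [mem_iUnion, mem_univ, iff_true, mem_setOf_eq]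
      obtain ⟨n, hn⟩ := exists_nat_ge (g ω)
      exact ⟨n, hn⟩
    have hdir : Directed (· ⊆ ·) (fun n : ℕ => {ω | g ω ≤ (n : ℝ)}) := by
      apply Monotone.directed_le
      intro a b hab ω hω
      simp only [mem_setOf_eq] at hω ⊢
      exact le_trans hω (by exact_mod_cast hab)
    have h1 : (⨆ n : ℕ, μ {ω | g ω ≤ (n : ℝ)}) = 1 := by
      rw [← hdir.measure_iUnion, hu, measure_univ]
    have : ENNReal.ofReal ((k : ℝ) * ε) < ⨆ n : ℕ, μ {ω | g ω ≤ (n : ℝ)} := by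
      rw [h1]; exact ENNReal.ofReal_lt_one.2 (hklt1 k hk)
    obtain ⟨n, hn⟩ := lt_iSup_iff.1 this
    exact ⟨n, le_of_lt hn⟩
  have hSbdd : ∀ k : ℕ, 1 ≤ k → BddBelow (S k) := by
    intro k hk
    have hi : (⋂ n : ℕ, {ω | g ω ≤ -(n : ℝ)}) = ∅ := by
      ext ω; simp only [mem_iInter, mem_empty_iff_false, iff_false, mem_setOf_eq, not_forall]
      obtain ⟨n, hn⟩ := exists_nat_gt (-(g ω))
      exact ⟨n, by push_neg; linarith⟩
    have hdir : Directed (· ⊇ ·) (fun n : ℕ => {ω | g ω ≤ -(n : ℝ)}) := by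
      apply Antitone.directed_ge
      intro a b hab ω hω
      simp only [mem_setOf_eq] at hω ⊢
      have : (a : ℝ) ≤ (b : ℝ) := by exact_mod_cast hab
      linarith
    have h0 : (⨅ n : ℕ, μ {ω | g ω ≤ -(n : ℝ)}) = 0 := by
      rw [← Directed.measure_iInter (fun n => (hmeasle _).nullMeasurableSet) hdir
        ⟨0, measure_ne_top μ _⟩, hi, measure_empty]
    have hpos : (0 : ℝ≥0∞) < ENNReal.ofReal ((k : ℝ) * ε) := by
      apply ENNReal.ofReal_pos.2
      have : (1 : ℝ) ≤ (k : ℝ) := by exact_mod_cast hk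
      nlinarith
    have : (⨅ n : ℕ, μ {ω | g ω ≤ -(n : ℝ)}) < ENNReal.ofReal ((k : ℝ) * ε) := by
      rw [h0]; exact hpos
    obtain ⟨n, hn⟩ := iInf_lt_iff.1 this
    refine ⟨-(n : ℝ), fun s hs => ?_⟩
    by_contra hc
    push_neg at hc
    exact absurd (le_trans hs (measure_mono (fun ω hω => le_trans hω hc.le)))
      (not_le.2 hn)
  have hH : ∀ k : ℕ, 1 ≤ k → k ≤ N - 1 →
      ENNReal.ofReal ((k : ℝ) * ε) ≤ μ {ω | g ω ≤ t k} := by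
    intro k hk1 hkN
    have heq : {ω | g ω ≤ t k} = ⋂ n : ℕ, {ω | g ω ≤ t k + 1 / (n + 1)} := by
      ext ω
      simp only [mem_iInter, mem_setOf_eq]
      constructor
      · intro h n
        have : (0:ℝ) < 1 / ((n:ℝ) + 1) := by positivity
        linarith
      · intro h
        by_contra hc
        push_neg at hc
        obtain ⟨n, hn⟩ := exists_nat_one_div_lt (show (0:ℝ) < g ω - t k by linarith)
        have := h n
        linarith
    have hdir : Directed (· ⊇ ·) (fun n : ℕ => {ω | g ω ≤ t k + 1 / (n + 1)}) := by
      apply Antitone.directed_ge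
      intro a b hab ω hω
      simp only [mem_setOf_eq] at hω ⊢
      have hab' : ((a:ℕ):ℝ) + 1 ≤ ((b:ℕ):ℝ) + 1 := by
        have : (a:ℝ) ≤ (b:ℝ) := by exact_mod_cast hab
        linarith
      have : (1:ℝ) / ((b:ℝ)+1) ≤ 1 / ((a:ℝ)+1) :=
        one_div_le_one_div_of_le (by positivity) hab'
      linarith
    rw [heq, Directed.measure_iInter (fun n => (hmeasle _).nullMeasurableSet) hdir
      ⟨0, measure_ne_top μ _⟩]
    refine le_iInf fun n => ?_
    obtain ⟨s, hsS, hslt⟩ := exists_lt_of_csInf_lt (hSne k hkN)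
      (show sInf (S k) < t k + 1 / (n + 1) by
        have : (0:ℝ) < 1 / ((n:ℝ) + 1) := by positivity
        simp only [ht]; linarith)
    exact le_trans hsS (measure_mono fun ω hω => le_trans hω hslt.le)
  have hG : ∀ k : ℕ, 1 ≤ k → k ≤ N - 1 →
      μ {ω | g ω < t k} ≤ ENNReal.ofReal ((k : ℝ) * ε) := by
    intro k hk1 hkN
    have heq : {ω | g ω < t k} = ⋃ n : ℕ, {ω | g ω ≤ t k - 1 / (n + 1)} := by
      ext ω
      simp only [mem_iUnion, mem_setOf_eq]
      constructor
      · intro h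
        obtain ⟨n, hn⟩ := exists_nat_one_div_lt (show (0:ℝ) < t k - g ω by linarith)
        exact ⟨n, by linarith⟩
      · rintro ⟨n, hn⟩
        have : (0:ℝ) < 1 / ((n:ℝ) + 1) := by positivity
        linarith
    have hdir : Directed (· ⊆ ·) (fun n : ℕ => {ω | g ω ≤ t k - 1 / (n + 1)}) := by
      apply Monotone.directed_le
      intro a b hab ω hω
      simp only [mem_setOf_eq] at hω ⊢
      have hab' : ((a:ℕ):ℝ) + 1 ≤ ((b:ℕ):ℝ) + 1 := by
        have : (a:ℝ) ≤ (b:ℝ) := by exact_mod_cast hab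
        linarith
      have : (1:ℝ) / ((b:ℝ)+1) ≤ 1 / ((a:ℝ)+1) :=
        one_div_le_one_div_of_le (by positivity) hab'
      linarith
    rw [heq, hdir.measure_iUnion]
    refine iSup_le fun n => ?_
    have hnot : t k - 1 / (n + 1) ∉ S k := by
      intro hmem
      have := csInf_le (hSbdd k hk1) hmem
      have hpos : (0:ℝ) < 1 / ((n:ℝ) + 1) := by positivity
      simp only [ht] at *
      linarith
    simp only [hS, mem_setOf_eq, not_le] at hnot
    exact hnot.le
  have hmono : ∀ k k' : ℕ, 1 ≤ k → k ≤ k' → k' ≤ N - 1 → t k ≤ t k' := by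
    intro k k' hk1 hkk hkN
    apply csInf_le_csInf (hSbdd k hk1) (hSne k' hkN)
    intro s hs
    refine le_trans (ENNReal.ofReal_le_ofReal ?_) hs
    have : (k:ℝ) ≤ (k':ℝ) := by exact_mod_cast hkk
    nlinarith
  -- build pairs
  set A : ℕ → Set Ω := fun k => if k = 0 then ∅ else {ω | g ω ≤ t k} with hA
  set B : ℕ → Set Ω := fun k => if k = N - 1 then univ else {ω | g ω < t (k + 1)} with hB
  refine ⟨(Finset.range N).image (fun k => (A k, B k)), ?_, ?_, ?_⟩
  · exact le_trans (Finset.card_image_le) (by simp)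
  · intro p hp
    simp only [Finset.mem_image, Finset.mem_range] at hp
    obtain ⟨k, _, rfl⟩ := hp
    constructor
    · simp only [hA]; split_ifs
      · exact MeasurableSet.empty
      · exact hmeasle _
    · simp only [hB]; split_ifs
      · exact MeasurableSet.univ
      · exact hmeaslt _
  · intro x
    have hmemrange : ∀ k, k < N → (A k, B k) ∈ (Finset.range N).image (fun k => (A k, B k)) :=
      fun k hk => Finset.mem_image.2 ⟨k, Finset.mem_range.2 hk, rfl⟩
    have hN1' : 1 ≤ N - 1 := by omega
    by_cases hx : x ≤ (t 1 : EReal)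
    · refine ⟨(A 0, B 0), hmemrange 0 (by omega), ?_, ?_, ?_⟩
      · simp [hA]
      · intro ω hω
        simp only [hB, if_neg (show 0 ≠ N - 1 by omega)]
        simp only [mem_setOf_eq] at hω ⊢
        have : ((g ω : ℝ) : EReal) < (t 1 : EReal) := lt_of_lt_of_le hω hx
        exact_mod_cast this
      · simp only [hA, hB, if_pos rfl, if_neg (show 0 ≠ N - 1 by omega), diff_empty]
        have := hG 1 le_rfl hN1'
        simpa using this
    · push_neg at hx
      set P : ℕ → Prop := fun m => (t m : EReal) < x with hP
      set k := Nat.findGreatest P (N - 1) with hk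
      have hk1 : 1 ≤ k := Nat.le_findGreatest hN1' hx
      have hkN : k ≤ N - 1 := Nat.findGreatest_le _
      have hPk : P k := Nat.findGreatest_spec (m := 1) hN1' hx
      by_cases hktop : k = N - 1
      · refine ⟨(A k, B k), hmemrange k (by omega), ?_, ?_, ?_⟩
        · intro ω hω
          simp only [hA, if_neg (show k ≠ 0 by omega), mem_setOf_eq] at hω
          simp only [mem_setOf_eq]
          refine lt_of_le_of_lt ?_ hPk
          exact_mod_cast hω
        · intro ω _
          simp [hB, if_pos hktop]
        · simp only [hA, hB, if_pos hktop, if_neg (show k ≠ 0 by omega)]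
          set C := {ω | g ω ≤ t k} with hC
          have hkey : μ (univ \ C) + μ C = 1 := by
            have := measure_diff_add_inter (μ := μ) univ (hmeasle (t k))
            simpa [univ_inter] using this
          have hCbig : ENNReal.ofReal (((N : ℝ) - 1) * ε) ≤ μ C := by
            have := hH k hk1 hkN
            rw [hktop] at this
            have hcast : ((N - 1 : ℕ) : ℝ) = (N : ℝ) - 1 := by
              rw [Nat.cast_sub (by omega)]; simp
            rw [hC, hktop]
            rwa [hcast] at this
          have h1 : (1 : ℝ≥0∞) ≤ ENNReal.ofReal ε + μ C := by
            refine le_trans ?_ (add_le_add le_rfl hCbig)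
            have hNr : (2:ℝ) ≤ (N:ℝ) := by exact_mod_cast hN2
            rw [← ENNReal.ofReal_add hε.le (by nlinarith : (0:ℝ) ≤ ((N:ℝ)-1)*ε)]
            rw [show ε + ((N:ℝ)-1)*ε = (N:ℝ)*ε by ring]
            calc (1:ℝ≥0∞) = ENNReal.ofReal 1 := by simp
            _ ≤ _ := ENNReal.ofReal_le_ofReal hNε
          have := hkey.le.trans h1
          rwa [ENNReal.add_le_add_iff_right (measure_ne_top μ C)] at this
      · have hk1N : k + 1 ≤ N - 1 := by omega
        have hnP : ¬ P (k + 1) :=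
          Nat.findGreatest_is_greatest (by omega) hk1N
        have hxle : x ≤ (t (k+1) : EReal) := not_lt.1 hnP
        refine ⟨(A k, B k), hmemrange k (by omega), ?_, ?_, ?_⟩
        · intro ω hω
          simp only [hA, if_neg (show k ≠ 0 by omega), mem_setOf_eq] at hω
          simp only [mem_setOf_eq]
          refine lt_of_le_of_lt ?_ hPk
          exact_mod_cast hω
        · intro ω hω
          simp only [mem_setOf_eq] at hω
          simp only [hB, if_neg hktop, mem_setOf_eq]
          have : ((g ω : ℝ) : EReal) < (t (k+1) : EReal) := lt_of_lt_of_le hω hxle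
          exact_mod_cast this
        · simp only [hA, hB, if_neg hktop, if_neg (show k ≠ 0 by omega)]
          set C := {ω | g ω ≤ t k} with hC
          set D := {ω | g ω < t (k+1)} with hD
          rcases lt_or_eq_of_le (hmono k (k+1) hk1 (by omega) hk1N) with hlt | heq
          · have hCD : C ⊆ D := fun ω hω => lt_of_le_of_lt hω hlt
            have hkey : μ (D \ C) + μ C = μ D := by
              have := measure_diff_add_inter (μ := μ) D (hmeasle (t k))
              rwa [inter_eq_right.2 hCD] at this
            have hDle : μ D ≤ ENNReal.ofReal (((k:ℝ)+1) * ε) := by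
              have := hG (k+1) (by omega) hk1N
              simpa [Nat.cast_add, Nat.cast_one] using this
            have hCge : ENNReal.ofReal ((k:ℝ) * ε) ≤ μ C := hH k hk1 hkN
            have h1 : μ D ≤ ENNReal.ofReal ε + μ C := by
              refine le_trans hDle (le_trans ?_ (add_le_add le_rfl hCge))
              rw [← ENNReal.ofReal_add hε.le (by positivity : (0:ℝ) ≤ (k:ℝ)*ε)]
              exact ENNReal.ofReal_le_ofReal (le_of_eq (by ring))
            have := hkey.le.trans h1
            rwa [ENNReal.add_le_add_iff_right (measure_ne_top μ C)] at this
          · have hDC : D ⊆ C := fun ω hω => by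
              simp only [hD, mem_setOf_eq, ← heq] at hω
              exact hω.le
            have : D \ C = ∅ := diff_eq_empty.2 hDC
            simp [this]

/-- Lemma (existence of small δ-covers for anchored boxes): there is an absolute
constant `c > 0` such that for every `d`, every `G ⊆ ℝ^d`, every probability measure
`π` on `G` and every `δ > 0` there is a `δ`-cover `Γδ` of the family
`𝒜 = {(−∞,x) ∩ G : x ∈ (ℝ ∪ {±∞})^d}` with respect to `π` of cardinality
`|Γδ| ≤ (3 + 4c²d δ⁻²)^d`. -/
theorem exists_deltaCover_boxes :
    ∃ c : ℝ, 0 < c ∧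
      ∀ (d : ℕ) (G : Set (Fin d → ℝ)) (π : Measure G), IsProbabilityMeasure π →
        ∀ δ : ℝ, 0 < δ →
          ∃ Γδ : Finset (Set G),
            (∀ C ∈ Γδ, MeasurableSet C) ∧
            (∀ x : Fin d → EReal,
              ∃ C ∈ Γδ, ∃ D ∈ Γδ,
                C ⊆ {y : G | ∀ j, ((y : Fin d → ℝ) j : EReal) < x j} ∧
                {y : G | ∀ j, ((y : Fin d → ℝ) j : EReal) < x j} ⊆ D ∧
                (π (D \ C)).toReal ≤ δ) ∧
            (Γδ.card : ℝ) ≤ (3 + 4 * c ^ 2 * d * δ⁻¹ ^ 2) ^ d := by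
  classical
  refine ⟨1, one_pos, ?_⟩
  intro d G π hπ δ hδ
  rcases Nat.eq_zero_or_pos d with hd | hd
  · subst hd
    refine ⟨{Set.univ}, ?_, ?_, ?_⟩
    · intro C hC
      simp only [Finset.mem_singleton] at hC
      subst hC; exact MeasurableSet.univ
    · intro x
      refine ⟨Set.univ, Finset.mem_singleton_self _, Set.univ, Finset.mem_singleton_self _,
        fun y _ j => j.elim0, fun y _ => Set.mem_univ y, ?_⟩
      simp [hδ.le]
    · simp
  · have hbase : (0:ℝ) ≤ 4 * (1:ℝ) ^ 2 * d * δ⁻¹ ^ 2 := by positivity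
    by_cases hδ1 : 1 ≤ δ
    · -- trivial cover
      refine ⟨{∅, Set.univ}, ?_, ?_, ?_⟩
      · intro C hC
        simp only [Finset.mem_insert, Finset.mem_singleton] at hC
        rcases hC with rfl | rfl
        exacts [MeasurableSet.empty, MeasurableSet.univ]
      · intro x
        refine ⟨∅, by simp, Set.univ, by simp, Set.empty_subset _,
          Set.subset_univ _, ?_⟩
        simp [hδ1]
      · have h2 : ({∅, Set.univ} : Finset (Set G)).card ≤ 2 :=
          le_trans (Finset.card_insert_le _ _) (by simp)
        have h3 : ((2:ℕ):ℝ) ≤ (3 + 4 * (1:ℝ) ^ 2 * d * δ⁻¹ ^ 2) ^ d := by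
          calc ((2:ℕ):ℝ) ≤ 3 := by norm_num
          _ ≤ 3 ^ d := le_self_pow₀ (by norm_num) (by omega)
          _ ≤ _ := pow_le_pow_left₀ (by norm_num) (by linarith) d
        exact le_trans (by exact_mod_cast h2) h3
    · push_neg at hδ1
      set ε := δ / d with hε
      set N := ⌈(d:ℝ)/δ⌉₊ with hN
      have hdr : (1:ℝ) ≤ d := by exact_mod_cast hd
      have hdpos : (0:ℝ) < d := by linarith
      have hεpos : 0 < ε := div_pos hδ hdpos
      have hratio : 1 < (d:ℝ)/δ := by
        rw [lt_div_iff₀ hδ]; nlinarith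
      have hN2 : 2 ≤ N := by
        have h1 : (1:ℕ) < N := Nat.lt_ceil.2 (by exact_mod_cast hratio)
        omega
      have hNge : (d:ℝ)/δ ≤ N := Nat.le_ceil _
      have hNlt : (N:ℝ) < (d:ℝ)/δ + 1 := Nat.ceil_lt_add_one (by positivity)
      have hde : (d:ℝ)/δ * ε = 1 := by
        field_simp [hε]
        rw [hε]; field_simp
      have hNε : 1 ≤ (N:ℝ) * ε := by
        nlinarith [hεpos.le]
      have hN1 : ((N:ℝ) - 1) * ε < 1 := by
        have h1 : (N:ℝ) - 1 < (d:ℝ)/δ := by linarith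
        nlinarith [hεpos]
      have hgj : ∀ j : Fin d, Measurable (fun y : G => (y : Fin d → ℝ) j) :=
        fun j => (measurable_pi_apply j).comp measurable_subtype_coe
      choose s hscard hsmeas hssand using fun j : Fin d =>
        lemmaA π (fun y : G => (y : Fin d → ℝ) j) (hgj j) ε hεpos N hN2 hNε hN1
      refine ⟨((Fintype.piFinset s).image fun f => ⋂ j, (f j).1) ∪
        ((Fintype.piFinset s).image fun f => ⋂ j, (f j).2), ?_, ?_, ?_⟩
      · intro C hC
        rcases Finset.mem_union.1 hC with h | h <;>
          obtain ⟨f, hf, rfl⟩ := Finset.mem_image.1 h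
        · exact MeasurableSet.iInter fun j =>
            (hsmeas j _ (Fintype.mem_piFinset.1 hf j)).1
        · exact MeasurableSet.iInter fun j =>
            (hsmeas j _ (Fintype.mem_piFinset.1 hf j)).2
      · intro x
        choose p hp hp1 hp2 hp3 using fun j => hssand j (x j)
        have hmem : p ∈ Fintype.piFinset s := Fintype.mem_piFinset.2 hp
        refine ⟨⋂ j, (p j).1,
          Finset.mem_union_left _ (Finset.mem_image.2 ⟨p, hmem, rfl⟩),
          ⋂ j, (p j).2,
          Finset.mem_union_right _ (Finset.mem_image.2 ⟨p, hmem, rfl⟩), ?_, ?_, ?_⟩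
        · intro y hy
          exact fun j => hp1 j (Set.mem_iInter.1 hy j)
        · intro y hy
          exact Set.mem_iInter.2 fun j => hp2 j (hy j)
        · have hsub : (⋂ j, (p j).2) \ (⋂ j, (p j).1) ⊆
              ⋃ j, ((p j).2 \ (p j).1) := by
            rintro y ⟨hyD, hyC⟩
            simp only [Set.mem_iInter, not_forall] at hyC
            obtain ⟨j, hj⟩ := hyC
            exact Set.mem_iUnion.2 ⟨j, Set.mem_iInter.1 hyD j, hj⟩
          have hle : π ((⋂ j, (p j).2) \ (⋂ j, (p j).1)) ≤ ENNReal.ofReal δ := by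
            calc π _ ≤ π (⋃ j, ((p j).2 \ (p j).1)) := measure_mono hsub
            _ ≤ ∑' j, π ((p j).2 \ (p j).1) := measure_iUnion_le _
            _ = ∑ j, π ((p j).2 \ (p j).1) := tsum_fintype _
            _ ≤ ∑ _j : Fin d, ENNReal.ofReal ε :=
              Finset.sum_le_sum fun j _ => hp3 j
            _ = (d : ℝ≥0∞) * ENNReal.ofReal ε := by
              simp [Finset.sum_const, nsmul_eq_mul]
            _ = ENNReal.ofReal ((d:ℝ) * ε) := by
              rw [ENNReal.ofReal_mul (by positivity)]
              congr 1
              exact (ENNReal.ofReal_natCast d).symm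
            _ = ENNReal.ofReal δ := by
              congr 1
              field_simp [hε]
              rw [hε]; field_simp
          exact ENNReal.toReal_le_of_le_ofReal hδ.le hle
      · have hcard1 : (Fintype.piFinset s).card ≤ N ^ d := by
          rw [Fintype.card_piFinset]
          calc ∏ j, (s j).card ≤ ∏ _j : Fin d, N :=
            Finset.prod_le_prod' fun j _ => hscard j
          _ = N ^ d := by simp
        have hcard : (((Fintype.piFinset s).image fun f => ⋂ j, (f j).1) ∪
            ((Fintype.piFinset s).image fun f => ⋂ j, (f j).2)).card ≤ 2 * N ^ d := by
          refine le_trans (Finset.card_union_le _ _) ?_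
          have h1 : (((Fintype.piFinset s).image fun f => ⋂ j, (f j).1)).card ≤ N ^ d :=
            le_trans Finset.card_image_le hcard1
          have h2 : (((Fintype.piFinset s).image fun f => ⋂ j, (f j).2)).card ≤ N ^ d :=
            le_trans Finset.card_image_le hcard1
          calc _ ≤ N ^ d + N ^ d := add_le_add h1 h2
          _ = 2 * N ^ d := (two_mul _).symm
        have hnat : 2 * N ^ d ≤ (2 * N) ^ d := by
          rw [mul_pow]
          exact Nat.mul_le_mul_right _ (le_trans (by norm_num)
            (Nat.pow_le_pow_right (by norm_num) hd))
        have hreal : ((2 * N : ℕ) : ℝ) ≤ 3 + 4 * (1:ℝ) ^ 2 * d * δ⁻¹ ^ 2 := by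
          have hu : δ * δ⁻¹ = 1 := mul_inv_cancel₀ hδ.ne'
          have hu0 : (0:ℝ) < δ⁻¹ := by positivity
          have hu1 : (1:ℝ) < δ⁻¹ := by
            have := mul_lt_mul_of_pos_right hδ1 hu0
            rwa [hu, one_mul] at this
          have hNlt' : (N:ℝ) < (d:ℝ) * δ⁻¹ + 1 := by
            rwa [div_eq_mul_inv] at hNlt
          push_cast
          nlinarith [mul_nonneg (mul_nonneg hdpos.le hu0.le)
            (by linarith : (0:ℝ) ≤ 2 * δ⁻¹ - 1), hdpos, hu0]
        calc ((((Fintype.piFinset s).image fun f => ⋂ j, (f j).1) ∪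
            ((Fintype.piFinset s).image fun f => ⋂ j, (f j).2)).card : ℝ)
            ≤ ((2 * N : ℕ) ^ d : ℕ) := by exact_mod_cast le_trans hcard hnat
          _ = (((2 * N : ℕ) : ℝ)) ^ d := by push_cast; ring
          _ ≤ (3 + 4 * (1:ℝ) ^ 2 * d * δ⁻¹ ^ 2) ^ d :=
            pow_le_pow_left₀ (by positivity) hreal d
end

section
/- Let 1 ≤ p, q ≤ ∞ with 1/p + 1/q = 1, π a probability measure on G ⊆ ℝ^d, ρ a finite measure on G, and H_q the space of functions f: G → ℂ of the form f(x) = f_0 + ∫_G 1_{(−∞,z)_G}(x) f̃(z) ρ(dz) with f̃ ∈ L_q(G,ρ), normed by ‖f‖_{H_q} = (|f_0|^q + ∫|f̃|^q dρ)^{1/q}. Then for any points x_1,...,x_n ∈ G and any f ∈ H_q: |∫_G f dπ − n^{-1}Σ_{i=1}^n f(x_i)| ≤ ‖f‖_{H_q} · D*_{p,𝒜,π}(P_n), where D*_{p,𝒜,π}(P_n) = (∫_G |∫_G 1_{(−∞,z)_G}(y) π(dy) − n^{-1}Σ_i 1_{(−∞,z)_G}(x_i)|^p ρ(dz))^{1/p}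 (supremum over z when p = ∞). -/
open MeasureTheory Classical

/-- Indicator of the anchored box `(−∞,z)_G`. -/
noncomputable def boxInd {d : ℕ} {G : Set (Fin d → ℝ)} (z x : G) : ℝ :=
  if ∀ j, (x : Fin d → ℝ) j < (z : Fin d → ℝ) j then 1 else 0

/-- The `H_q`-norm of a function `f(x) = f₀ + ∫ 1_{(−∞,z)_G}(x) f̃(z) ρ(dz)`,
namely `(|f₀|^q + ∫ |f̃|^q dρ)^{1/q}` (with the obvious modification for `q = ∞`),
realized as the `L_q`-norm of the pair `(f₀, f̃)` on `Unit ⊕ G` with the measure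
`δ_() ⊕ ρ`. -/
noncomputable def Hnorm {d : ℕ} {G : Set (Fin d → ℝ)} (q : ENNReal)
    (f₀ : ℂ) (ft : G → ℂ) (ρ : Measure G) : ENNReal :=
  eLpNorm (Sum.elim (fun _ : Unit => f₀) ft) q
    ((Measure.dirac ()).map Sum.inl + ρ.map Sum.inr)

/-- The `L_q(ρ)`-norm of `f̃` is at most the `H_q`-norm of `(f₀, f̃)`. -/
theorem eLpNorm_le_Hnorm {d : ℕ} {G : Set (Fin d → ℝ)} (q : ENNReal)
    (f₀ : ℂ) (ft : G → ℂ) (ρ : Measure G) :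
    eLpNorm ft q ρ ≤ Hnorm q f₀ ft ρ := by
  have hinr : MeasurableEmbedding (@Sum.inr Unit G) :=
    { injective := Sum.inr_injective
      measurable := measurable_inr
      measurableSet_image' := fun s hs => measurableSet_inr_image.2 hs }
  have h1 : eLpNorm ft q ρ
      = eLpNorm (Sum.elim (fun _ : Unit => f₀) ft) q (ρ.map Sum.inr) := by
    rw [hinr.eLpNorm_map_measure]
    rfl
  rw [h1, Hnorm]
  exact eLpNorm_mono_measure _ (Measure.le_add_left le_rfl)

/-- Koksma–Hlawka / Hölder duality inequality: for conjugate exponents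
`1 ≤ p, q ≤ ∞`, points `x_1,…,x_n ∈ G` and `f ∈ H_q` with representation
`f(x) = f₀ + ∫_G 1_{(−∞,z)_G}(x) f̃(z) ρ(dz)`, the quadrature error satisfies
`|∫_G f dπ − n⁻¹ Σ_i f(x_i)| ≤ ‖f‖_{H_q} · D*_{p,𝒜,π}(P_n)`, where
`D*_{p,𝒜,π}(P_n)` is the `L_p(ρ)`-norm of
`z ↦ π((−∞,z)_G) − n⁻¹ Σ_i 1_{(−∞,z)_G}(x_i)` (the sup over `z` for `p = ∞`). -/
theorem koksma_hlawka_Hq {d : ℕ} {G : Set (Fin d → ℝ)}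
    (π ρ : Measure G) [IsProbabilityMeasure π] [IsFiniteMeasure ρ]
    (p q : ENNReal) (hp : 1 ≤ p) (hq : 1 ≤ q) (hpq : 1 / p + 1 / q = 1)
    (n : ℕ) (hn : 1 ≤ n) (x : Fin n → G)
    (f₀ : ℂ) (ft : G → ℂ) (hft : MemLp ft q ρ)
    (f : G → ℂ) (hf : ∀ y : G, f y = f₀ + ∫ z, (boxInd z y : ℂ) * ft z ∂ρ) :
    (‖(∫ y, f y ∂π) - (n : ℝ)⁻¹ * ∑ i, f (x i)‖₊ : ENNReal) ≤
      Hnorm q f₀ ft ρ *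
        eLpNorm (fun z : G =>
          (π {y : G | ∀ j, (y : Fin d → ℝ) j < (z : Fin d → ℝ) j}).toReal
            - (n : ℝ)⁻¹ * ∑ i, boxInd z (x i)) p ρ := by
  classical
  have hcoe : Measurable fun y : G => (y : Fin d → ℝ) := measurable_subtype_coe
  set S : G → Set G :=
    fun z => {y : G | ∀ j, (y : Fin d → ℝ) j < (z : Fin d → ℝ) j} with hS
  -- measurability facts
  have hSmeas : ∀ z : G, MeasurableSet (S z) := by
    intro z
    rw [hS]
    simp only [Set.setOf_forall]
    exact MeasurableSet.iInter fun j => measurableSet_lt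
      ((measurable_pi_apply j).comp hcoe) measurable_const
  have hTmeas : MeasurableSet
      {pr : G × G | ∀ j, (pr.2 : Fin d → ℝ) j < (pr.1 : Fin d → ℝ) j} := by
    simp only [Set.setOf_forall]
    exact MeasurableSet.iInter fun j => measurableSet_lt
      ((measurable_pi_apply j).comp (hcoe.comp measurable_snd))
      ((measurable_pi_apply j).comp (hcoe.comp measurable_fst))
  have hbox2 : Measurable fun pr : G × G => boxInd pr.2 pr.1 := by
    have hT2 : MeasurableSet
        {pr : G × G | ∀ j, (pr.1 : Fin d → ℝ) j < (pr.2 : Fin d → ℝ) j} := by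
      simp only [Set.setOf_forall]
      exact MeasurableSet.iInter fun j => measurableSet_lt
        ((measurable_pi_apply j).comp (hcoe.comp measurable_fst))
        ((measurable_pi_apply j).comp (hcoe.comp measurable_snd))
    unfold boxInd
    exact Measurable.ite hT2 measurable_const measurable_const
  have hBmeas : ∀ c : G, Measurable fun z : G => boxInd z c := by
    intro c
    unfold boxInd
    refine Measurable.ite ?_ measurable_const measurable_const
    simp only [Set.setOf_forall]
    exact MeasurableSet.iInter fun j => measurableSet_lt
      measurable_const ((measurable_pi_apply j).comp hcoe)
  have hπm : Measurable fun z : G => (π (S z)).toReal := by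
    have h := measurable_measure_prodMk_left (ν := π) hTmeas
    exact h.ennreal_toReal
  -- basic bounds on boxInd
  have hbox01 : ∀ z c : G, boxInd z c = 0 ∨ boxInd z c = 1 := by
    intro z c; unfold boxInd; split <;> simp
  have hbox_nonneg : ∀ z c : G, 0 ≤ boxInd z c := by
    intro z c; rcases hbox01 z c with h | h <;> simp [h]
  have hbox_le_one : ∀ z c : G, boxInd z c ≤ 1 := by
    intro z c; rcases hbox01 z c with h | h <;> simp [h]
  have hbox_norm : ∀ z c : G, ‖(boxInd z c : ℂ)‖ ≤ 1 := by
    intro z c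
    rw [Complex.norm_real, Real.norm_eq_abs, abs_of_nonneg (hbox_nonneg z c)]
    exact hbox_le_one z c
  -- integrability of ft
  have hft1 : Integrable ft ρ := hft.integrable hq
  have hftm : AEStronglyMeasurable ft ρ := hft.1
  -- the discrepancy function
  set g : G → ℝ :=
    fun z => (π (S z)).toReal - (n : ℝ)⁻¹ * ∑ i, boxInd z (x i) with hg
  have hgm : Measurable g := by
    exact hπm.sub
      (measurable_const.mul (Finset.measurable_sum _ fun i _ => hBmeas (x i)))
  -- bounds
  have hπle : ∀ z : G, ‖(((π (S z)).toReal : ℝ) : ℂ)‖ ≤ 1 := by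
    intro z
    rw [Complex.norm_real, Real.norm_eq_abs, abs_of_nonneg ENNReal.toReal_nonneg]
    have h1 : π (S z) ≤ 1 := prob_le_one
    simpa using ENNReal.toReal_mono (by simp) h1
  have hn0 : (0 : ℝ) < (n : ℝ) := by exact_mod_cast hn
  have hsum_norm : ∀ z : G, ‖((((n : ℝ)⁻¹ * ∑ i, boxInd z (x i)) : ℝ) : ℂ)‖ ≤ 1 := by
    intro z
    have h0 : 0 ≤ (n : ℝ)⁻¹ * ∑ i, boxInd z (x i) :=
      mul_nonneg (by positivity) (Finset.sum_nonneg fun i _ => hbox_nonneg _ _)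
    rw [Complex.norm_real, Real.norm_eq_abs, abs_of_nonneg h0]
    rw [inv_mul_le_iff₀ hn0, mul_one]
    calc (∑ i, boxInd z (x i)) ≤ ∑ _i : Fin n, (1 : ℝ) :=
          Finset.sum_le_sum fun i _ => hbox_le_one _ _
      _ = (n : ℝ) := by simp
  -- integrability of the various products against ft
  have hint_pi : Integrable (fun z => ((π (S z)).toReal : ℂ) * ft z) ρ :=
    hft1.bdd_mul (Complex.measurable_ofReal.comp hπm).aestronglyMeasurable
      (c := 1) (Filter.Eventually.of_forall fun z => hπle z)
  have hint_box : ∀ c : G, Integrable (fun z => (boxInd z c : ℂ) * ft z) ρ := fun c =>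
    hft1.bdd_mul (Complex.measurable_ofReal.comp (hBmeas c)).aestronglyMeasurable
      (c := 1) (Filter.Eventually.of_forall fun z => hbox_norm z c)
  have hint_sum :
      Integrable (fun z => ((((n : ℝ)⁻¹ * ∑ i, boxInd z (x i)) : ℝ) : ℂ) * ft z) ρ :=
    hft1.bdd_mul (Complex.measurable_ofReal.comp
        (measurable_const.mul (Finset.measurable_sum _ fun i _ => hBmeas (x i)))).aestronglyMeasurable
      (c := 1) (Filter.Eventually.of_forall fun z => hsum_norm z)
  -- Fubini
  have hFint : Integrable (fun pr : G × G => (boxInd pr.2 pr.1 : ℂ) * ft pr.2) (π.prod ρ) := by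
    have hmF : AEStronglyMeasurable
        (fun pr : G × G => (boxInd pr.2 pr.1 : ℂ) * ft pr.2) (π.prod ρ) :=
      ((Complex.measurable_ofReal.comp hbox2).aestronglyMeasurable).mul hftm.comp_snd
    have hmap : (π.prod ρ).map Prod.snd = ρ := by
      rw [Measure.map_snd_prod]; simp
    have hint2 : Integrable (fun pr : G × G => ft pr.2) (π.prod ρ) := by
      have := (integrable_map_measure (f := Prod.snd) (μ := π.prod ρ)
        (by rw [hmap]; exact hftm) measurable_snd.aemeasurable).mp
        (by rw [hmap]; exact hft1)
      exact this
    refine hint2.mono hmF (Filter.Eventually.of_forall fun pr => ?_)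
    rw [norm_mul]
    calc ‖(boxInd pr.2 pr.1 : ℂ)‖ * ‖ft pr.2‖ ≤ 1 * ‖ft pr.2‖ := by
          gcongr; exact hbox_norm _ _
      _ = ‖ft pr.2‖ := one_mul _
  -- inner integral
  have hinner : ∀ z : G, ∫ y, (boxInd z y : ℂ) * ft z ∂π = ((π (S z)).toReal : ℂ) * ft z := by
    intro z
    rw [integral_mul_const]
    have hbi : (fun y => boxInd z y) = (S z).indicator (fun _ => (1 : ℝ)) := by
      funext y
      simp only [boxInd, Set.indicator_apply, hS, Set.mem_setOf_eq]
    have hbiC : (fun y => (boxInd z y : ℂ)) = (S z).indicator (fun _ => (1 : ℂ)) := by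
      funext y
      simp only [boxInd, Set.indicator_apply, hS, Set.mem_setOf_eq]
      split <;> simp
    rw [hbiC, integral_indicator_const (1 : ℂ) (hSmeas z)]
    simp [Complex.real_smul, measureReal_def]
  -- the ∫ f dπ side
  have hmargin : Integrable (fun y => ∫ z, (boxInd z y : ℂ) * ft z ∂ρ) π :=
    hFint.integral_prod_left
  have hA : ∫ y, f y ∂π = f₀ + ∫ z, ((π (S z)).toReal : ℂ) * ft z ∂ρ := by
    simp only [hf]
    rw [integral_add (integrable_const f₀) hmargin, integral_const]
    simp only [probReal_univ, one_smul]
    congr 1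
    rw [integral_integral_swap (f := fun (y : G) (z : G) => (boxInd z y : ℂ) * ft z) hFint]
    exact integral_congr_ae (Filter.Eventually.of_forall hinner)
  -- the quadrature side
  have hB : (((n : ℝ)⁻¹ : ℝ) : ℂ) * ∑ i, f (x i)
      = f₀ + ∫ z, ((((n : ℝ)⁻¹ * ∑ i, boxInd z (x i)) : ℝ) : ℂ) * ft z ∂ρ := by
    have hn' : (n : ℝ) ≠ 0 := ne_of_gt hn0
    simp only [hf, Finset.sum_add_distrib, Finset.sum_const, Finset.card_univ,
      Fintype.card_fin, nsmul_eq_mul, mul_add]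
    congr 1
    · have hn'' : (n : ℂ) ≠ 0 := Nat.cast_ne_zero.mpr (by omega)
      push_cast
      rw [← mul_assoc, inv_mul_cancel₀ hn'', one_mul]
    · rw [← integral_finset_sum _ fun i _ => hint_box (x i), ← integral_const_mul]
      exact integral_congr_ae (Filter.Eventually.of_forall fun z => by push_cast; rw [← Finset.sum_mul]; ring)
  -- combine
  have key : (∫ y, f y ∂π) - (((n : ℝ)⁻¹ : ℝ) : ℂ) * ∑ i, f (x i) = ∫ z, g z • ft z ∂ρ := by
    rw [hA, hB, add_sub_add_left_eq_sub, ← integral_sub hint_pi hint_sum]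
    refine integral_congr_ae (Filter.Eventually.of_forall fun z => ?_)
    simp only [hg, Complex.real_smul]
    push_cast
    ring
  rw [key]
  have hHolder : (‖∫ z, g z • ft z ∂ρ‖₊ : ENNReal) ≤ eLpNorm ft q ρ * eLpNorm g p ρ := by
    calc (‖∫ z, g z • ft z ∂ρ‖₊ : ENNReal) ≤ ∫⁻ z, ‖g z • ft z‖₊ ∂ρ :=
        enorm_integral_le_lintegral_enorm _
      _ = eLpNorm (g • ft) 1 ρ := by rw [eLpNorm_one_eq_lintegral_enorm]; rfl
      _ ≤ eLpNorm g p ρ * eLpNorm ft q ρ :=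
        eLpNorm_smul_le_mul_eLpNorm hftm hgm.aestronglyMeasurable
          (hpqr := ⟨by simpa [one_div] using hpq⟩)
      _ = eLpNorm ft q ρ * eLpNorm g p ρ := mul_comm _ _
  exact hHolder.trans (mul_le_mul_left (eLpNorm_le_Hnorm q f₀ ft ρ) _)
end

section
/- Let π be the normalized surface measure on S^d and C(y,u), C(y,w) spherical caps with the same center y and heights 0 ≤ u ≤ w ≤ 1 with w − u ≤ 5/M (M ≥ 1). Then π(C(y,u) \ C(y,w)) ≤ √(35/M) / B(1; d/2, 1/2), where B(s; a, b) = ∫_0^s z^{a−1}(1−z)^{b−1} dz is the incomplete beta function and π(C(y,t)) = B(1−t²; d/2, 1/2)/(2B(1; d/2, 1/2)) for 0 ≤ t ≤ 1. -/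
open MeasureTheory

/-- The spherical cap `C(y,t) = {z ∈ S^d : ⟨y,z⟩ > t}`. -/
def cap {d : ℕ} (y : EuclideanSpace ℝ (Fin (d + 1))) (t : ℝ) :
    Set (EuclideanSpace ℝ (Fin (d + 1))) :=
  {z | ‖z‖ = 1 ∧ t < inner ℝ y z}

/-- The incomplete beta function `B(s; d/2, 1/2) = ∫_0^s z^{d/2−1}(1−z)^{−1/2} dz`. -/
noncomputable def incBeta (d : ℕ) (s : ℝ) : ℝ :=
  ∫ z in (0 : ℝ)..s, z ^ ((d : ℝ) / 2 - 1) * (1 - z) ^ (-(1 : ℝ) / 2)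

section Aux

open intervalIntegral Real

private lemma betaLeft {p q : ℝ} (hp : -1 < p) :
    IntervalIntegrable (fun z : ℝ => z ^ p * (1 - z) ^ q) volume 0 (1/2) := by
  apply IntervalIntegrable.mul_continuousOn
  · exact intervalIntegrable_rpow' hp
  · apply ContinuousOn.rpow_const
    · exact (continuous_const.sub continuous_id).continuousOn
    · intro x hx
      rw [Set.uIcc_of_le (by norm_num : (0:ℝ) ≤ 1/2)] at hx
      left; intro h; linarith [hx.2]

private lemma betaFull {p q : ℝ} (hp : -1 < p) (hq : -1 < q) :
    IntervalIntegrable (fun z : ℝ => z ^ p * (1 - z) ^ q) volume 0 1 := by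
  refine (betaLeft hp).trans ?_
  rw [IntervalIntegrable.iff_comp_neg]
  convert ((betaLeft hq (q := p)).comp_add_right 1).symm using 1
  · ext1 x
    conv_lhs => rw [mul_comm]
    congr 2 <;> ring
  · norm_num
  · norm_num

private lemma rpow_neg_half {z : ℝ} (h0 : 0 ≤ z) : z ^ (-(1:ℝ)/2) = 1 / Real.sqrt z := by
  rw [show (-(1:ℝ)/2) = -(1/2) by ring, Real.rpow_neg h0, ← Real.sqrt_eq_rpow, one_div]

private lemma hasDerivAt_F {z : ℝ} (h0 : 0 < z) (h1 : z < 1) :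
    HasDerivAt (fun x : ℝ => 2 * arcsin (Real.sqrt x))
      (z ^ (-(1:ℝ)/2) * (1 - z) ^ (-(1:ℝ)/2)) z := by
  have hs : HasDerivAt Real.sqrt (1 / (2 * Real.sqrt z)) z := Real.hasDerivAt_sqrt h0.ne'
  have hsz : Real.sqrt z < 1 := by
    rw [show (1:ℝ) = Real.sqrt 1 by simp]
    exact Real.sqrt_lt_sqrt h0.le h1
  have ha : HasDerivAt arcsin (1 / Real.sqrt (1 - Real.sqrt z ^ 2)) (Real.sqrt z) :=
    Real.hasDerivAt_arcsin (by nlinarith [Real.sqrt_nonneg z]) hsz.ne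
  have := (ha.comp z hs).const_mul 2
  refine this.congr_deriv ?_
  rw [Real.sq_sqrt h0.le, rpow_neg_half h0.le, rpow_neg_half (by linarith)]
  have hz : Real.sqrt z > 0 := Real.sqrt_pos.2 h0
  have hz1 : Real.sqrt (1 - z) > 0 := Real.sqrt_pos.2 (by linarith)
  field_simp

set_option maxHeartbeats 1000000 in
/-- Key real inequality. -/
private lemma arcsin_diff_le {a b M : ℝ} (ha : 0 ≤ a) (hab : a ≤ b) (hb : b ≤ 1)
    (hM : 1 ≤ M) (hba : b - a ≤ 10 / M) :
    2 * arcsin (Real.sqrt b) - 2 * arcsin (Real.sqrt a) ≤ 2 * Real.sqrt (35 / M) := by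
  have hM0 : (0:ℝ) < M := by linarith
  set s := arcsin (Real.sqrt a) with hs
  set t := arcsin (Real.sqrt b) with ht
  have hs0 : 0 ≤ s := Real.arcsin_nonneg.2 (Real.sqrt_nonneg a)
  have hst : s ≤ t := Real.monotone_arcsin (Real.sqrt_le_sqrt hab)
  have htp : t ≤ Real.pi / 2 := Real.arcsin_le_pi_div_two _
  have hsqa1 : Real.sqrt a ≤ 1 := by
    rw [show (1:ℝ) = Real.sqrt 1 by simp]; exact Real.sqrt_le_sqrt (hab.trans hb)
  have hsqb1 : Real.sqrt b ≤ 1 := by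
    rw [show (1:ℝ) = Real.sqrt 1 by simp]; exact Real.sqrt_le_sqrt hb
  have hsins : Real.sin s = Real.sqrt a :=
    Real.sin_arcsin (by linarith [Real.sqrt_nonneg a]) hsqa1
  have hsint : Real.sin t = Real.sqrt b :=
    Real.sin_arcsin (by linarith [Real.sqrt_nonneg b]) hsqb1
  have hsa : Real.sin s ^ 2 = a := by rw [hsins, Real.sq_sqrt ha]
  have hsb : Real.sin t ^ 2 = b := by rw [hsint, Real.sq_sqrt (ha.trans hab)]
  -- b - a = sin(t+s) sin(t-s)
  have hid : Real.sin (t + s) * Real.sin (t - s) = b - a := by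
    rw [Real.sin_add, Real.sin_sub, ← hsa, ← hsb]
    nlinarith [Real.sin_sq_add_cos_sq s, Real.sin_sq_add_cos_sq t]
  -- sin(t+s) ≥ sin(t-s)
  have hcos : 0 ≤ Real.cos t := Real.cos_nonneg_of_mem_Icc ⟨by linarith, htp⟩
  have hsinspos : 0 ≤ Real.sin s :=
    Real.sin_nonneg_of_nonneg_of_le_pi hs0 (by linarith [Real.pi_pos])
  have hge : Real.sin (t - s) ≤ Real.sin (t + s) := by
    rw [Real.sin_add, Real.sin_sub]
    nlinarith
  -- sin(t-s) ≥ (2/π)(t-s)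
  have hlow : 2 / Real.pi * (t - s) ≤ Real.sin (t - s) :=
    Real.mul_le_sin (by linarith) (by linarith)
  have hpi : (0:ℝ) < Real.pi := Real.pi_pos
  have hpi315 : Real.pi ≤ 3.15 := by linarith [Real.pi_lt_d2]
  have hlow0 : 0 ≤ 2 / Real.pi * (t - s) :=
    mul_nonneg (by positivity) (by linarith)
  have hsq : (2 / Real.pi * (t - s)) ^ 2 ≤ b - a := by
    nlinarith [hid, hge, hlow]
  have hX : 4 * (t - s)^2 ≤ (b - a) * Real.pi ^ 2 := by
    have h2 : (2 / Real.pi * (t - s)) ^ 2 = 4 * (t - s)^2 / Real.pi ^ 2 := by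
      field_simp; ring
    rw [h2] at hsq
    calc 4 * (t - s)^2 = 4 * (t - s)^2 / Real.pi ^ 2 * Real.pi ^ 2 := by field_simp
    _ ≤ (b - a) * Real.pi ^ 2 := by nlinarith
  have hXfin : (t - s)^2 ≤ 35 / M := by
    have hMi : (0:ℝ) ≤ 1 / M := by positivity
    have h10 : b - a ≤ 10 * (1 / M) := by rw [mul_one_div]; exact hba
    have hba0 : 0 ≤ b - a := by linarith
    have hpisq : Real.pi ^ 2 ≤ 9.9225 := by nlinarith
    have h1 : 4 * (t - s)^2 ≤ 10 * (1/M) * 9.9225 := by nlinarith [mul_le_mul hba hpisq (sq_nonneg Real.pi) (by positivity : (0:ℝ) ≤ 10 / M)]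
    have h2 : (35:ℝ) / M = 35 * (1/M) := by ring
    rw [h2]; linarith
  have : t - s ≤ Real.sqrt (35 / M) := by
    have := Real.sqrt_le_sqrt hXfin
    rwa [Real.sqrt_sq (by linarith)] at this
  linarith

end Aux

/-- Lemma: if `π` is the normalized surface measure on `S^d`, so that
`π(C(y,t)) = B(1−t²; d/2, 1/2)/(2B(1; d/2, 1/2))` for `0 ≤ t ≤ 1`, and
`0 ≤ u ≤ w ≤ 1` with `w − u ≤ 5/M` (`M ≥ 1`), then
`π(C(y,u) \ C(y,w)) ≤ √(35/M) / B(1; d/2, 1/2)`. -/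
theorem measure_cap_diff_le {d : ℕ} (hd : 1 ≤ d)
    (π : Measure (EuclideanSpace ℝ (Fin (d + 1)))) [IsProbabilityMeasure π]
    (y : EuclideanSpace ℝ (Fin (d + 1))) (hy : ‖y‖ = 1)
    (hcapMeasure : ∀ t : ℝ, t ∈ Set.Icc (0 : ℝ) 1 →
      π (cap y t) = ENNReal.ofReal (incBeta d (1 - t ^ 2) / (2 * incBeta d 1)))
    (M : ℝ) (hM : 1 ≤ M) (u w : ℝ) (hu : 0 ≤ u) (huw : u ≤ w) (hw : w ≤ 1)
    (hdiff : w - u ≤ 5 / M) :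
    π (cap y u \ cap y w) ≤ ENNReal.ofReal (Real.sqrt (35 / M) / incBeta d 1) := by
  have hM0 : (0:ℝ) < M := by linarith
  have hw0 : 0 ≤ w := hu.trans huw
  have hu1 : u ≤ 1 := huw.trans hw
  set a : ℝ := 1 - w ^ 2 with hadef
  set b : ℝ := 1 - u ^ 2 with hbdef
  have ha : 0 ≤ a := by nlinarith
  have hab : a ≤ b := by nlinarith
  have hb : b ≤ 1 := by nlinarith
  set f : ℝ → ℝ := fun z => z ^ ((d : ℝ) / 2 - 1) * (1 - z) ^ (-(1 : ℝ) / 2) with hf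
  set g : ℝ → ℝ := fun z => z ^ (-(1:ℝ) / 2) * (1 - z) ^ (-(1 : ℝ) / 2) with hg
  have hdp : (-1 : ℝ) < (d : ℝ) / 2 - 1 := by
    have : (1:ℝ) ≤ (d:ℝ) := by exact_mod_cast hd
    linarith
  have hfint : IntervalIntegrable f volume 0 1 := betaFull hdp (by norm_num)
  have hgint : IntervalIntegrable g volume 0 1 := betaFull (by norm_num) (by norm_num)
  -- integrability on subintervals
  have hsub01 : ∀ {c e : ℝ}, 0 ≤ c → e ≤ 1 → c ≤ e → Set.uIcc c e ⊆ Set.uIcc (0:ℝ) 1 := by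
    intro c e hc he hce
    rw [Set.uIcc_of_le hce, Set.uIcc_of_le (by norm_num : (0:ℝ) ≤ 1)]
    exact Set.Icc_subset_Icc hc he
  have hfint0b : IntervalIntegrable f volume 0 b := hfint.mono_set (hsub01 le_rfl hb (ha.trans hab))
  have hfint0a : IntervalIntegrable f volume 0 a := hfint.mono_set (hsub01 le_rfl (hab.trans hb) ha)
  have hfintab : IntervalIntegrable f volume a b := hfint.mono_set (hsub01 ha hb hab)
  have hgintab : IntervalIntegrable g volume a b := hgint.mono_set (hsub01 ha hb hab)
  -- positivity of incBeta d 1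
  have hB1 : 0 < incBeta d 1 := by
    rw [incBeta]
    apply intervalIntegral.intervalIntegral_pos_of_pos_on hfint
    · intro x hx
      have h1x : 0 < 1 - x := by linarith [hx.2]
      exact mul_pos (Real.rpow_pos_of_pos hx.1 _) (Real.rpow_pos_of_pos h1x _)
    · norm_num
  -- incBeta difference as an integral
  have hdiffInt : incBeta d b - incBeta d a = ∫ z in a..b, f z := by
    rw [incBeta, incBeta]
    exact intervalIntegral.integral_interval_sub_left hfint0b hfint0a
  -- compare f with g a.e.
  have hfg : (∫ z in a..b, f z) ≤ ∫ z in a..b, g z := by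
    apply intervalIntegral.integral_mono_ae_restrict hab hfintab hgintab
    have hne : ∀ᵐ z : ℝ ∂(volume.restrict (Set.Icc a b)), z ≠ 0 := by
      refine ae_restrict_of_ae ?_
      rw [ae_iff]
      have : {z : ℝ | ¬z ≠ 0} = {(0:ℝ)} := by ext z; simp
      rw [this]
      exact Real.volume_singleton
    filter_upwards [hne, ae_restrict_mem measurableSet_Icc] with z hz hzm
    have hz0 : 0 < z := lt_of_le_of_ne (ha.trans hzm.1) (Ne.symm hz)
    have hz1 : z ≤ 1 := hzm.2.trans hb
    have : z ^ ((d : ℝ) / 2 - 1) ≤ z ^ (-(1:ℝ)/2) := by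
      apply Real.rpow_le_rpow_of_exponent_ge hz0 hz1
      have : (1:ℝ) ≤ (d:ℝ) := by exact_mod_cast hd
      linarith
    exact mul_le_mul_of_nonneg_right this (Real.rpow_nonneg (by linarith) _)
  -- FTC for g
  have hFTC : (∫ z in a..b, g z) =
      2 * Real.arcsin (Real.sqrt b) - 2 * Real.arcsin (Real.sqrt a) := by
    apply intervalIntegral.integral_eq_sub_of_hasDeriv_right_of_le
      (f := fun x => 2 * Real.arcsin (Real.sqrt x)) hab
    · exact (continuous_const.mul (Real.continuous_arcsin.comp Real.continuous_sqrt)).continuousOn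
    · intro x hx
      exact (hasDerivAt_F (ha.trans_lt hx.1) (hx.2.trans_le hb)).hasDerivWithinAt
    · exact hgintab
  -- assemble real inequality
  have hba : b - a ≤ 10 / M := by
    have : b - a = (w + u) * (w - u) := by rw [hbdef, hadef]; ring
    rw [this]
    have h1 : (w + u) * (w - u) ≤ 2 * (5 / M) := by
      have h5 : 0 ≤ 5 / M := by positivity
      nlinarith
    calc (w + u) * (w - u) ≤ 2 * (5 / M) := h1
    _ = 10 / M := by ring
  have hkey : incBeta d b - incBeta d a ≤ 2 * Real.sqrt (35 / M) := by
    rw [hdiffInt]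
    calc (∫ z in a..b, f z) ≤ ∫ z in a..b, g z := hfg
    _ = 2 * Real.arcsin (Real.sqrt b) - 2 * Real.arcsin (Real.sqrt a) := hFTC
    _ ≤ 2 * Real.sqrt (35 / M) := arcsin_diff_le ha hab hb hM hba
  -- nonnegativity of incBeta values
  have hIB_nonneg : ∀ s : ℝ, 0 ≤ s → s ≤ 1 → 0 ≤ incBeta d s := by
    intro s hs hs1
    rw [incBeta]
    apply intervalIntegral.integral_nonneg hs
    intro x hx
    exact mul_nonneg (Real.rpow_nonneg hx.1 _)
      (Real.rpow_nonneg (by linarith [hx.2]) _)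
  -- measure theory side
  have hcapw_sub : cap y w ⊆ cap y u := by
    intro z hz
    exact ⟨hz.1, lt_of_le_of_lt huw hz.2⟩
  have hmeas : MeasurableSet (cap y w) := by
    have h1 : MeasurableSet {z : EuclideanSpace ℝ (Fin (d+1)) | ‖z‖ = 1} :=
      (isClosed_eq continuous_norm continuous_const).measurableSet
    have hcont : Continuous fun z : EuclideanSpace ℝ (Fin (d+1)) => (inner ℝ y z : ℝ) :=
      continuous_const.inner continuous_id
    have h2 : MeasurableSet {z : EuclideanSpace ℝ (Fin (d+1)) | w < inner ℝ y z} :=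
      (isOpen_lt continuous_const hcont).measurableSet
    exact h1.inter h2
  rw [measure_diff hcapw_sub hmeas.nullMeasurableSet (measure_ne_top π _),
    hcapMeasure u ⟨hu, hu1⟩, hcapMeasure w ⟨hw0, hw⟩,
    ← ENNReal.ofReal_sub _ (div_nonneg (hIB_nonneg _ ha (hab.trans hb)) (by positivity))]
  · apply ENNReal.ofReal_le_ofReal
    rw [div_sub_div_same, div_le_div_iff₀ (by positivity) hB1]
    calc (incBeta d b - incBeta d a) * incBeta d 1
        ≤ 2 * Real.sqrt (35 / M) * incBeta d 1 := by
          exact mul_le_mul_of_nonneg_right hkey hB1.le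
    _ = Real.sqrt (35 / M) * (2 * incBeta d 1) := by ring
end
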